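/- Fix an integer A ≥ 1 and set ε := 1/A. There exist real constants C > 0 and Q₀ > 0, depending only on A, such that for every real Q ≥ Q₀ and every z ∈ ℂ with |z| ≤ Q^{−(1+ε)/2}: the numbers 1 + Q·z² and 1 − Q^{a−1}·z^{2a−1} for 1 ≤ a ≤ A are all nonzero, and |(1 + z + Q·z²)·(1 + Q·z²)^{−1}·∏_{a=1}^{A}(1 − Q^{a−1}·z^{2a−1})^{−(−1)^a} − 1| ≤ C·Q^{−1−ε}. (The left-hand expression equals F_Q(z)/H_{Q,A}(z) where F_Q(z) = (1−z)(1+z+Qz²)/(1−Q²z³) and H_{Q,A}(z) = (1−z)(1+Qz²)∏_{a=1}^{A}(1−Q^{a−1}z^{2a−1})^{(−1)^a}/(1−Q²z³).) -/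

import Mathlib

noncomputable section

open Finset

noncomputable section

private lemma aux_prod_expand (z : ℂ) (f : ℕ → ℂ) (hz : ‖z‖ ≤ 1) :
    ∀ s : Finset ℕ, (∀ a ∈ s, ‖f a‖ ≤ 1) →
      ∃ U : ℂ, (∏ a ∈ s, (1 - z * f a)) = 1 - z * (∑ a ∈ s, f a) + z ^ 2 * U ∧
        ‖U‖ ≤ (s.card : ℝ) * 2 ^ s.card := by
  intro s
  induction s using Finset.induction_on with
  | empty => intro _; exact ⟨0, by simp, by simp⟩
  | @insert a s ha ih =>
      intro hf
      obtain ⟨U, hU, hUb⟩ := ih (fun b hb => hf b (mem_insert_of_mem hb))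
      have hfa : ‖f a‖ ≤ 1 := hf a (mem_insert_self a s)
      have hS : ‖∑ b ∈ s, f b‖ ≤ (s.card : ℝ) := by
        calc ‖∑ b ∈ s, f b‖ ≤ ∑ b ∈ s, ‖f b‖ := norm_sum_le _ _
          _ ≤ ∑ b ∈ s, 1 := Finset.sum_le_sum (fun b hb => hf b (mem_insert_of_mem hb))
          _ = (s.card : ℝ) := by simp
      refine ⟨U + f a * (∑ b ∈ s, f b) - z * (f a * U), ?_, ?_⟩
      · rw [Finset.prod_insert ha, hU, Finset.sum_insert ha]; ring
      · have h1 : ‖U + f a * (∑ b ∈ s, f b) - z * (f a * U)‖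
            ≤ ‖U‖ + ‖f a‖ * ‖∑ b ∈ s, f b‖ + ‖z‖ * (‖f a‖ * ‖U‖) := by
          calc ‖U + f a * (∑ b ∈ s, f b) - z * (f a * U)‖
              ≤ ‖U + f a * (∑ b ∈ s, f b)‖ + ‖z * (f a * U)‖ := norm_sub_le _ _
            _ ≤ ‖U‖ + ‖f a * (∑ b ∈ s, f b)‖ + ‖z * (f a * U)‖ := by
                gcongr; exact norm_add_le _ _
            _ = ‖U‖ + ‖f a‖ * ‖∑ b ∈ s, f b‖ + ‖z‖ * (‖f a‖ * ‖U‖) := by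
                rw [norm_mul, norm_mul, norm_mul]
        rw [Finset.card_insert_of_notMem ha]
        push_cast
        have hc2 : (s.card : ℝ) ≤ 2 ^ s.card := by
          exact_mod_cast (Nat.lt_two_pow_self (n := s.card)).le
        have hU0 : (0:ℝ) ≤ ‖U‖ := norm_nonneg _
        have hS0 : (0:ℝ) ≤ ‖∑ b ∈ s, f b‖ := norm_nonneg _
        have hz0 : (0:ℝ) ≤ ‖z‖ := norm_nonneg _
        have hfa0 : (0:ℝ) ≤ ‖f a‖ := norm_nonneg _
        have e1 : ‖f a‖ * ‖∑ b ∈ s, f b‖ ≤ (s.card : ℝ) := by nlinarith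
        have e2a : ‖f a‖ * ‖U‖ ≤ ‖U‖ := by nlinarith
        have e2b : ‖z‖ * (‖f a‖ * ‖U‖) ≤ ‖f a‖ * ‖U‖ := by nlinarith [mul_nonneg hfa0 hU0]
        have e2 : ‖z‖ * (‖f a‖ * ‖U‖) ≤ (s.card : ℝ) * 2 ^ s.card := by linarith
        have hp : (0:ℝ) < 2 ^ s.card := by positivity
        calc ‖U + f a * (∑ b ∈ s, f b) - z * (f a * U)‖
            ≤ (s.card : ℝ) * 2 ^ s.card + (s.card : ℝ) + (s.card : ℝ) * 2 ^ s.card := by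
              linarith
          _ ≤ ((s.card : ℝ) + 1) * 2 ^ (s.card + 1) := by
              rw [pow_succ]; nlinarith

set_option maxHeartbeats 1000000 in
/-- For fixed `A ≥ 1` and `ε = 1/A` there are constants `C, Q₀ > 0`
such that for all real `Q ≥ Q₀` and all `z ∈ ℂ` with `|z| ≤ Q^{−(1+ε)/2}`, the relevant
factors are nonzero and
`|(1+z+Qz²)(1+Qz²)⁻¹ ∏_{a=1}^{A} (1−Q^{a−1}z^{2a−1})^{−(−1)^a} − 1| ≤ C·Q^{−1−ε}`. -/
theorem stmt11 (A : ℕ) (hA : 1 ≤ A) :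
    ∃ C Q₀ : ℝ, 0 < C ∧ 0 < Q₀ ∧
      ∀ Q : ℝ, Q₀ ≤ Q → ∀ z : ℂ, ‖z‖ ≤ Q ^ (-(1 + (A : ℝ)⁻¹) / 2) →
        ((1 + (Q : ℂ) * z ^ 2 ≠ 0) ∧
          ∀ a ∈ Finset.Icc 1 A, 1 - (Q : ℂ) ^ (a - 1) * z ^ (2 * a - 1) ≠ 0) ∧
        ‖(1 + z + (Q : ℂ) * z ^ 2) * (1 + (Q : ℂ) * z ^ 2)⁻¹ *
            (∏ a ∈ Finset.Icc 1 A,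
              (1 - (Q : ℂ) ^ (a - 1) * z ^ (2 * a - 1)) ^ (-(-1 : ℤ) ^ a)) - 1‖
          ≤ C * Q ^ (-1 - (A : ℝ)⁻¹) := by
  classical
  have hA0 : (0:ℝ) < A := by exact_mod_cast hA
  have hAne : (A:ℝ) ≠ 0 := ne_of_gt hA0
  set ε : ℝ := (A:ℝ)⁻¹ with hεdef
  have hε0 : 0 < ε := by positivity
  have hε1 : ε ≤ 1 := by
    rw [hεdef]
    rw [inv_le_one_iff₀]
    right; exact_mod_cast hA
  set B : ℝ := (A:ℝ) * 2 ^ A with hBdef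
  have hB0 : 0 < B := by positivity
  set M : ℝ := 8 * ((A:ℝ) + B + 2) with hMdef
  have hM1 : 1 < M := by nlinarith
  refine ⟨2 * (1 + (5*B + (A:ℝ))), M ^ (2*A), by positivity, by positivity, ?_⟩
  intro Q hQ z hz
  have hQ₀1 : (1:ℝ) < M ^ (2*A) := one_lt_pow₀ hM1 (by omega)
  have hQ1 : 1 < Q := lt_of_lt_of_le hQ₀1 hQ
  have hQ0 : 0 < Q := by linarith
  -- basic norm bounds
  have hzsq : ‖z‖ ^ 2 ≤ Q ^ (-1 - ε) := by
    calc ‖z‖ ^ 2 ≤ (Q ^ (-(1 + ε) / 2)) ^ 2 := by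
          exact pow_le_pow_left₀ (norm_nonneg z) hz 2
      _ = Q ^ (-1 - ε) := by
          rw [← Real.rpow_natCast (Q ^ (-(1 + ε) / 2)) 2, ← Real.rpow_mul hQ0.le]
          rw [show -(1 + ε) / 2 * (2:ℕ) = -1 - ε by push_cast; ring]
  set w : ℂ := (Q:ℂ) * z ^ 2 with hwdef
  have hnw : ‖w‖ = Q * ‖z‖ ^ 2 := by
    rw [hwdef, norm_mul, norm_pow, Complex.norm_real, Real.norm_eq_abs, abs_of_pos hQ0]
  have hwε : ‖w‖ ≤ Q ^ (-ε) := by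
    rw [hnw]
    calc Q * ‖z‖ ^ 2 ≤ Q * Q ^ (-1 - ε) := by
          exact mul_le_mul_of_nonneg_left hzsq hQ0.le
      _ = Q ^ (1:ℝ) * Q ^ (-1 - ε) := by rw [Real.rpow_one]
      _ = Q ^ ((1:ℝ) + (-1 - ε)) := (Real.rpow_add hQ0 _ _).symm
      _ = Q ^ (-ε) := by rw [show (1:ℝ) + (-1 - ε) = -ε by ring]
  have hmono : ∀ x y : ℝ, x ≤ y → Q ^ x ≤ Q ^ y := fun x y h =>
    Real.rpow_le_rpow_of_exponent_le hQ1.le h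
  have hM0 : (0:ℝ) < M := by linarith
  have h2A : (0:ℝ) < 2 * A := by positivity
  have hQ₀pow : ((M ^ (2*A) : ℝ)) ^ ((1:ℝ)/(2*A)) = M := by
    rw [← Real.rpow_natCast M (2*A), ← Real.rpow_mul hM0.le]
    push_cast
    rw [mul_one_div, div_self (by positivity), Real.rpow_one]
  have hQpow : M ≤ Q ^ ((1:ℝ)/(2*A)) := by
    rw [← hQ₀pow]
    exact Real.rpow_le_rpow (by positivity) hQ (by positivity)
  have hkey : Q ^ (-(1/(2*(A:ℝ)))) ≤ M⁻¹ := by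
    rw [Real.rpow_neg hQ0.le]
    exact inv_anti₀ hM0 hQpow
  have hhalf : (1:ℝ)/(2*A) = ε/2 := by rw [hεdef]; field_simp
  have hzM : ‖z‖ ≤ M⁻¹ := by
    refine le_trans (le_trans hz (hmono _ _ ?_)) hkey
    rw [hhalf]; linarith
  have hwM : ‖w‖ ≤ M⁻¹ := by
    refine le_trans (le_trans hwε (hmono _ _ ?_)) hkey
    rw [hhalf]; linarith
  have hMinv1 : M⁻¹ < 1 := by
    rw [inv_lt_one_iff₀]; right; exact hM1
  have hz1 : ‖z‖ ≤ 1 := le_trans hzM hMinv1.le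
  have hw1 : ‖w‖ ≤ 1 := le_trans hwM hMinv1.le
  have hne : ∀ x : ℂ, ‖x‖ < 1 → (1:ℂ) - x ≠ 0 := by
    intro x hx h
    rw [sub_eq_zero] at h
    rw [← h] at hx
    simp at hx
  have h1w : (1:ℂ) + w ≠ 0 := by
    have := hne (-w) (by rw [norm_neg]; exact lt_of_le_of_lt hwM hMinv1)
    simpa [sub_neg_eq_add] using this
  have hconv : ∀ a : ℕ, 1 ≤ a → ((Q:ℂ))^(a-1) * z^(2*a-1) = z * w^(a-1) := by
    intro a ha
    obtain ⟨b, rfl⟩ := Nat.exists_eq_add_of_le ha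
    have h1 : 1 + b - 1 = b := by omega
    have h2 : 2*(1+b) - 1 = 2*b + 1 := by omega
    rw [h1, h2, hwdef, mul_pow, ← pow_mul]
    ring
  -- rewrite product over Icc as product over range
  have hP : (∏ a ∈ Finset.Icc 1 A, (1 - (Q:ℂ)^(a-1) * z^(2*a-1)) ^ (-(-1:ℤ)^a))
      = ∏ k ∈ Finset.range A, (1 - z * w^k) ^ ((-1:ℤ)^k) := by
    refine Finset.prod_bij' (fun a _ => a - 1) (fun k _ => k + 1) ?_ ?_ ?_ ?_ ?_
    · intro a ha; simp only [Finset.mem_Icc] at ha; simp only [Finset.mem_range]; omega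
    · intro k hk; simp only [Finset.mem_range] at hk; simp only [Finset.mem_Icc]; omega
    · intro a ha; simp only [Finset.mem_Icc] at ha; omega
    · intro k _; omega
    · intro a ha
      simp only [Finset.mem_Icc] at ha
      obtain ⟨b, rfl⟩ := Nat.exists_eq_add_of_le ha.1
      have h1 : 1 + b - 1 = b := by omega
      rw [hconv (1+b) (by omega), h1]
      congr 1
      rw [pow_add]; ring
  obtain ⟨U, hUeq, hUb⟩ := aux_prod_expand z (fun k => w^k) hz1
      ((Finset.range A).filter (fun k => Even k))
      (fun k _ => by simpa [norm_pow] using pow_le_one₀ (norm_nonneg w) hw1)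
  obtain ⟨V, hVeq, hVb⟩ := aux_prod_expand z (fun k => w^k) hz1
      ((Finset.range A).filter (fun k => ¬ Even k))
      (fun k _ => by simpa [norm_pow] using pow_le_one₀ (norm_nonneg w) hw1)
  set PE : ℂ := ∏ k ∈ (Finset.range A).filter (fun k => Even k), (1 - z * w^k) with hPEdef
  set PO : ℂ := ∏ k ∈ (Finset.range A).filter (fun k => ¬ Even k), (1 - z * w^k) with hPOdef
  set SE : ℂ := ∑ k ∈ (Finset.range A).filter (fun k => Even k), w^k with hSEdef
  set SO : ℂ := ∑ k ∈ (Finset.range A).filter (fun k => ¬ Even k), w^k with hSOdef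
  have hUeq' : PE = 1 - z * SE + z^2 * U := hUeq
  have hVeq' : PO = 1 - z * SO + z^2 * V := hVeq
  -- split the signed product
  have hsplit : (∏ k ∈ Finset.range A, (1 - z * w^k) ^ ((-1:ℤ)^k)) = PE * PO⁻¹ := by
    rw [← Finset.prod_filter_mul_prod_filter_not (Finset.range A) (fun k => Even k)]
    congr 1
    · refine Finset.prod_congr rfl fun k hk => ?_
      rw [(Finset.mem_filter.mp hk).2.neg_one_pow, zpow_one]
    · rw [hPOdef, ← Finset.prod_inv_distrib]
      refine Finset.prod_congr rfl fun k hk => ?_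
      have hodd : Odd k := Nat.not_even_iff_odd.mp (Finset.mem_filter.mp hk).2
      rw [hodd.neg_one_pow, zpow_neg_one]
  -- geometric identity
  have hgeom : 1 - (1+w) * (SE - SO) = (-w)^A := by
    have h1 : SE - SO = ∑ k ∈ Finset.range A, (-w)^k := by
      rw [← Finset.sum_filter_add_sum_filter_not (Finset.range A) (fun k => Even k)
        (fun k => (-w)^k)]
      have hE : (∑ k ∈ (Finset.range A).filter (fun k => Even k), (-w)^k) = SE :=
        Finset.sum_congr rfl fun k hk => (Finset.mem_filter.mp hk).2.neg_pow w
      have hO : (∑ k ∈ (Finset.range A).filter (fun k => ¬ Even k), (-w)^k) = -SO := by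
        rw [hSOdef, ← Finset.sum_neg_distrib]
        exact Finset.sum_congr rfl fun k hk =>
          (Nat.not_even_iff_odd.mp (Finset.mem_filter.mp hk).2).neg_pow w
      rw [hE, hO]; ring
    rw [h1]
    linear_combination geom_sum_mul (-w) A
  clear_value w PE PO SE SO
  -- norm bounds on U, V, SE, SO
  have hcb : ∀ s : Finset ℕ, s ⊆ Finset.range A → ((s.card:ℝ) * 2^s.card ≤ B) := by
    intro s hs
    have h1 : s.card ≤ A := by simpa using Finset.card_le_card hs
    have h2 : (2:ℝ)^s.card ≤ 2^A := pow_le_pow_right₀ one_le_two h1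
    have h3 : (s.card:ℝ) ≤ A := by exact_mod_cast h1
    rw [hBdef]
    exact mul_le_mul h3 h2 (by positivity) hA0.le
  have hUB : ‖U‖ ≤ B := le_trans hUb (hcb _ (Finset.filter_subset _ _))
  have hVB : ‖V‖ ≤ B := le_trans hVb (hcb _ (Finset.filter_subset _ _))
  have hsum : ∀ s : Finset ℕ, s ⊆ Finset.range A → ‖∑ k ∈ s, w^k‖ ≤ (A:ℝ) := by
    intro s hs
    calc ‖∑ k ∈ s, w^k‖ ≤ ∑ k ∈ s, ‖w^k‖ := norm_sum_le _ _
      _ ≤ ∑ k ∈ s, 1 := Finset.sum_le_sum fun k _ => by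
          simpa [norm_pow] using pow_le_one₀ (norm_nonneg w) hw1
      _ = (s.card : ℝ) := by simp
      _ ≤ (A:ℝ) := by exact_mod_cast (by simpa using Finset.card_le_card hs : s.card ≤ A)
  have hSEb : ‖SE‖ ≤ (A:ℝ) := by
    rw [hSEdef]; exact hsum _ (Finset.filter_subset _ _)
  have hSOb : ‖SO‖ ≤ (A:ℝ) := by
    rw [hSOdef]; exact hsum _ (Finset.filter_subset _ _)
  have h1wn : ‖(1:ℂ)+w‖ ≤ 2 := by
    calc ‖(1:ℂ)+w‖ ≤ ‖(1:ℂ)‖ + ‖w‖ := norm_add_le _ _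
      _ ≤ 2 := by rw [norm_one]; linarith
  -- denominator lower bound
  have hMinv0 : (0:ℝ) < M⁻¹ := by positivity
  have hzsq' : ‖z‖^2 ≤ M⁻¹ := by nlinarith [norm_nonneg z]
  have hDnorm : ‖(1+w)*PO - 1‖ ≤ 1/2 := by
    have hDval : (1+w) * PO - 1 = w - (1+w)*(z*SO - z^2*V) := by rw [hVeq']; ring
    rw [hDval]
    have n2 : ‖z*SO - z^2*V‖ ≤ M⁻¹*A + M⁻¹*B := by
      calc ‖z*SO - z^2*V‖ ≤ ‖z*SO‖ + ‖z^2*V‖ := norm_sub_le _ _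
        _ = ‖z‖*‖SO‖ + ‖z‖^2*‖V‖ := by rw [norm_mul, norm_mul, norm_pow]
        _ ≤ M⁻¹*A + M⁻¹*B := by
            have g1 : ‖z‖*‖SO‖ ≤ M⁻¹*(A:ℝ) := mul_le_mul hzM hSOb (norm_nonneg _) hMinv0.le
            have g2 : ‖z‖^2*‖V‖ ≤ M⁻¹*B := mul_le_mul hzsq' hVB (norm_nonneg _) hMinv0.le
            linarith
    have n3 : ‖w - (1+w)*(z*SO - z^2*V)‖ ≤ M⁻¹ + 2*(M⁻¹*A + M⁻¹*B) := by
      calc ‖w - (1+w)*(z*SO - z^2*V)‖ ≤ ‖w‖ + ‖(1+w)‖*‖z*SO - z^2*V‖ :=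
            le_trans (norm_sub_le _ _) (add_le_add_right (norm_mul_le _ _) _)
        _ ≤ M⁻¹ + 2*(M⁻¹*A + M⁻¹*B) := by
            refine add_le_add hwM ?_
            exact mul_le_mul h1wn n2 (norm_nonneg _) (by norm_num)
    have step2 : (1:ℝ)+2*A+2*B ≤ M * (1/2) := by rw [hMdef]; linarith
    have step3 : M⁻¹ * ((1:ℝ)+2*A+2*B) ≤ M⁻¹ * (M * (1/2)) :=
      mul_le_mul_of_nonneg_left step2 hMinv0.le
    have step4 : M⁻¹ * (M*(1/2)) = 1/2 := by
      rw [inv_mul_cancel_left₀ hM0.ne']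
    have : M⁻¹ + 2*(M⁻¹*A + M⁻¹*B) = M⁻¹ * ((1:ℝ)+2*A+2*B) := by ring
    linarith
  have hDlow : (1:ℝ)/2 ≤ ‖(1+w)*PO‖ := by
    have h := norm_sub_norm_le (1:ℂ) ((1+w)*PO)
    rw [norm_one, norm_sub_rev] at h
    linarith
  have hDne : (1+w)*PO ≠ 0 := by
    intro h
    rw [h, norm_zero] at hDlow
    linarith
  have hPOne : PO ≠ 0 := fun h => hDne (by rw [h, mul_zero])
  have hfrac : (1+z+w) * (1+w)⁻¹ * (PE * PO⁻¹) - 1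
      = ((1+z+w)*PE - (1+w)*PO) * ((1+w)*PO)⁻¹ := by
    have hc1 : (1+w) * (1+w)⁻¹ = 1 := mul_inv_cancel₀ h1w
    have hc2 : PO * PO⁻¹ = 1 := mul_inv_cancel₀ hPOne
    rw [mul_inv]
    linear_combination (PO * PO⁻¹) * hc1 + hc2
  have hkey : (1+z+w) * PE - (1+w) * PO
      = z * (-w)^A + z^2 * ((1+w)*(U - V) - SE + z*U) := by
    rw [hUeq', hVeq', ← hgeom]; ring
  have hWb : ‖(1+w)*(U - V) - SE + z*U‖ ≤ 5*B + A := by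
    have t1 : ‖(1+w)*(U-V) - SE + z*U‖ ≤ ‖(1+w)‖*‖U-V‖ + ‖SE‖ + ‖z‖*‖U‖ := by
      calc ‖(1+w)*(U-V) - SE + z*U‖ ≤ ‖(1+w)*(U-V) - SE‖ + ‖z*U‖ := norm_add_le _ _
        _ ≤ ‖(1+w)*(U-V)‖ + ‖SE‖ + ‖z*U‖ := by gcongr; exact norm_sub_le _ _
        _ = ‖(1+w)‖*‖U-V‖ + ‖SE‖ + ‖z‖*‖U‖ := by rw [norm_mul, norm_mul]
    have t2 : ‖U - V‖ ≤ 2*B := by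
      calc ‖U - V‖ ≤ ‖U‖ + ‖V‖ := norm_sub_le _ _
        _ ≤ 2*B := by linarith
    have t3 : ‖(1+w)‖*‖U-V‖ ≤ 2*(2*B) :=
      mul_le_mul h1wn t2 (norm_nonneg _) (by norm_num)
    have t4 : ‖z‖*‖U‖ ≤ B := by
      calc ‖z‖*‖U‖ ≤ 1*B := mul_le_mul hz1 hUB (norm_nonneg _) (by norm_num)
        _ = B := one_mul B
    linarith
  have hwA : ‖z‖ * ‖w‖^A ≤ Q ^ (-1-ε) := by
    have e1 : ‖w‖^A ≤ (Q^(-ε))^A := pow_le_pow_left₀ (norm_nonneg w) hwε A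
    have e2 : ((Q^(-ε)):ℝ)^A = Q^(-1:ℝ) := by
      rw [← Real.rpow_natCast (Q^(-ε)) A, ← Real.rpow_mul hQ0.le]
      congr 1
      rw [hεdef]; field_simp
    have e3 : ‖z‖ * ‖w‖^A ≤ Q^(-(1+ε)/2) * Q^(-1:ℝ) :=
      mul_le_mul hz (le_of_le_of_eq e1 e2) (by positivity) (by positivity)
    calc ‖z‖*‖w‖^A ≤ Q^(-(1+ε)/2) * Q^(-1:ℝ) := e3
      _ = Q^(-(1+ε)/2 + (-1)) := (Real.rpow_add hQ0 _ _).symm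
      _ ≤ Q^(-1-ε) := hmono _ _ (by linarith)
  refine ⟨⟨h1w, ?_⟩, ?_⟩
  · intro a ha
    rw [hconv a (Finset.mem_Icc.mp ha).1]
    apply hne
    have e1 : ‖z * w^(a-1)‖ ≤ ‖z‖ := by
      rw [norm_mul]
      exact mul_le_of_le_one_right (norm_nonneg z)
        (by simpa [norm_pow] using pow_le_one₀ (norm_nonneg w) hw1)
    exact lt_of_le_of_lt (le_trans e1 hzM) hMinv1
  · rw [hP, hsplit, hfrac, hkey, norm_mul, norm_inv]
    have num_b : ‖z * (-w)^A + z^2 * ((1+w)*(U - V) - SE + z*U)‖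
        ≤ Q^(-1-ε) + Q^(-1-ε)*(5*B+A) := by
      calc ‖z * (-w)^A + z^2 * ((1+w)*(U - V) - SE + z*U)‖
          ≤ ‖z‖*‖w‖^A + ‖z‖^2*‖(1+w)*(U - V) - SE + z*U‖ := by
            refine le_trans (norm_add_le _ _) ?_
            rw [norm_mul, norm_mul, norm_pow, norm_pow, norm_neg]
        _ ≤ Q^(-1-ε) + Q^(-1-ε)*(5*B+A) := by
            refine add_le_add hwA ?_
            exact mul_le_mul hzsq hWb (norm_nonneg _) (by positivity)
    have den_b : ‖(1+w)*PO‖⁻¹ ≤ 2 := by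
      rw [show (2:ℝ) = (1/2)⁻¹ by norm_num]
      exact inv_anti₀ (by norm_num) hDlow
    calc ‖z * (-w)^A + z^2 * ((1+w)*(U - V) - SE + z*U)‖ * ‖(1+w)*PO‖⁻¹
        ≤ (Q^(-1-ε) + Q^(-1-ε)*(5*B+A)) * 2 := by
          exact mul_le_mul num_b den_b (by positivity) (by positivity)
      _ = 2*(1+(5*B+(A:ℝ))) * Q^(-1-ε) := by ring
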